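/- arXiv:1806.00579 — 13 statements merged into one kernel-verified Lean document; each statement's English description precedes it below -/
import Mathlib

section
/- Let α, β be real numbers with α < 0 and β > 0. Then for all real x, ⌊α·⌊β·x⌋⌋ ≥ ⌊β·⌊α·x⌋⌋; that is, the commutator relation [f_α, f_β] ≥ 0 holds. -/
/-- Mixed sign dilations: if α < 0 and β > 0, then the commutator relation
[f_α, f_β] ≥ 0 holds, i.e. ⌊α·⌊β·x⌋⌋ ≥ ⌊β·⌊α·x⌋⌋ for all real x. -/
theorem mixed_sign_nonneg_commutator (α β : ℝ) (hα : α < 0) (hβ : 0 < β) :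
    ∀ x : ℝ, ⌊α * (⌊β * x⌋ : ℝ)⌋ ≥ ⌊β * (⌊α * x⌋ : ℝ)⌋ := by
  intro x
  apply Int.floor_mono
  have h1 : β * (⌊α * x⌋ : ℝ) ≤ β * (α * x) :=
    mul_le_mul_of_nonneg_left (Int.floor_le _) hβ.le
  have h2 : α * (β * x) ≤ α * (⌊β * x⌋ : ℝ) :=
    mul_le_mul_of_nonpos_left (Int.floor_le _) hα.le
  nlinarith
end

section
/- Let α, β be real numbers with α > 0 and β < 0. Then there exists a real x such that ⌊α·⌊β·x⌋⌋ < ⌊β·⌊α·x⌋⌋; that is, the commutator relation [f_α, f_β] ≥ 0 fails. -/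
/-- Mixed sign dilations: if α > 0 and β < 0, then the commutator relation
[f_α, f_β] ≥ 0 fails: there is a real x with ⌊α·⌊β·x⌋⌋ < ⌊β·⌊α·x⌋⌋. -/
theorem mixed_sign_commutator_fails (α β : ℝ) (hα : 0 < α) (hβ : β < 0) :
    ∃ x : ℝ, ⌊α * (⌊β * x⌋ : ℝ)⌋ < ⌊β * (⌊α * x⌋ : ℝ)⌋ := by
  have hc : 0 < α - β := by linarith
  have hc2 : 0 < 2 * (α - β) := by linarith
  refine ⟨1 / (2 * (α - β)), ?_⟩
  have h1 : ⌊α * (1 / (2 * (α - β)))⌋ = 0 := by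
    rw [Int.floor_eq_zero_iff]
    constructor
    · positivity
    · rw [mul_one_div, div_lt_one hc2]
      linarith
  have h2 : ⌊β * (1 / (2 * (α - β)))⌋ = -1 := by
    rw [Int.floor_eq_iff]
    · push_cast
      rw [mul_one_div]
      constructor
      · rw [le_div_iff₀ hc2]; linarith
      · have : β / (2 * (α - β)) < 0 := div_neg_of_neg_of_pos hβ hc2
        linarith
  rw [h1, h2]
  push_cast
  rw [mul_zero, Int.floor_zero]
  rw [Int.lt_iff_add_one_le, Int.add_one_le_iff]
  rw [Int.floor_lt]
  push_cast
  linarith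
end

section
/- The set { (α, β) ∈ ℝ² : (α ≥ 0 or β ≥ 0) and ⌊α·⌊β·x⌋⌋ ≥ ⌊β·⌊α·x⌋⌋ for all real x } is a closed subset of ℝ². -/
open Filter Topology

/-- Key limit lemma: if `(K, M)` is an "admissible pair" for positive `(α, β)`
(the floor-level sets of `⌊α·⌋` at `K` and of `⌊β·⌋` at `M` overlap in an open set),
and frequently `J ≤ b n * K`, then passing the commutator inequality for
`(a n, b n)` to the limit yields `J ≤ α * M`. -/
private lemma key_lemma (a b : ℕ → ℝ) (α β : ℝ)
    (ha : Tendsto a atTop (𝓝 α)) (hb : Tendsto b atTop (𝓝 β))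
    (hS : ∀ n, ∀ x : ℝ, ⌊a n * (⌊b n * x⌋ : ℝ)⌋ ≥ ⌊b n * (⌊a n * x⌋ : ℝ)⌋)
    (hα : 0 < α) (hβ : 0 < β) (K M J : ℤ)
    (h1 : β * K < α * ((M : ℝ) + 1)) (h2 : α * M < β * ((K : ℝ) + 1))
    (hJ : ∃ᶠ n in atTop, (J : ℝ) ≤ b n * K) : (J : ℝ) ≤ α * M := by
  have q1 : (K : ℝ) / α < ((K : ℝ) + 1) / α := (div_lt_div_iff₀ hα hα).mpr (by nlinarith)
  have q2 : (K : ℝ) / α < ((M : ℝ) + 1) / β := (div_lt_div_iff₀ hα hβ).mpr (by nlinarith)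
  have q3 : (M : ℝ) / β < ((K : ℝ) + 1) / α := (div_lt_div_iff₀ hβ hα).mpr (by nlinarith)
  have q4 : (M : ℝ) / β < ((M : ℝ) + 1) / β := (div_lt_div_iff₀ hβ hβ).mpr (by nlinarith)
  set L : ℝ := max ((K : ℝ) / α) ((M : ℝ) / β) with hLdef
  set R : ℝ := min (((K : ℝ) + 1) / α) (((M : ℝ) + 1) / β) with hRdef
  have hLR : L < R := max_lt (lt_min q1 q2) (lt_min q3 q4)
  set y : ℝ := (L + R) / 2 with hy
  have hLy : L < y := by rw [hy]; linarith
  have hyR : y < R := by rw [hy]; linarith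
  have hk1 : (K : ℝ) < α * y := by
    have h := lt_of_le_of_lt (le_max_left ((K : ℝ) / α) ((M : ℝ) / β)) hLy
    have := (div_lt_iff₀ hα).mp h
    linarith
  have hk2 : α * y < (K : ℝ) + 1 := by
    have h := lt_of_lt_of_le hyR (min_le_left _ _)
    have := (lt_div_iff₀ hα).mp h
    linarith
  have hm1 : (M : ℝ) < β * y := by
    have h := lt_of_le_of_lt (le_max_right ((K : ℝ) / α) ((M : ℝ) / β)) hLy
    have := (div_lt_iff₀ hβ).mp h
    linarith
  have hm2 : β * y < (M : ℝ) + 1 := by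
    have h := lt_of_lt_of_le hyR (min_le_right _ _)
    have := (lt_div_iff₀ hβ).mp h
    linarith
  have ta : Tendsto (fun n => a n * y) atTop (𝓝 (α * y)) := ha.mul_const y
  have tb : Tendsto (fun n => b n * y) atTop (𝓝 (β * y)) := hb.mul_const y
  have E : ∀ᶠ n in atTop, ⌊a n * y⌋ = K ∧ ⌊b n * y⌋ = M := by
    filter_upwards [ta.eventually (eventually_gt_nhds hk1),
      ta.eventually (eventually_lt_nhds hk2),
      tb.eventually (eventually_gt_nhds hm1),
      tb.eventually (eventually_lt_nhds hm2)] with n p1 p2 p3 p4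
    exact ⟨Int.floor_eq_iff.mpr ⟨p1.le, p2⟩, Int.floor_eq_iff.mpr ⟨p3.le, p4⟩⟩
  have hfm : ∃ᶠ n in atTop, (J : ℝ) ≤ a n * M := by
    apply (hJ.and_eventually E).mono
    rintro n ⟨hJn, hKn, hMn⟩
    have h5 := hS n y
    rw [hKn, hMn] at h5
    exact Int.le_floor.mp (le_trans (Int.le_floor.mpr hJn) h5)
  by_contra hc
  push_neg at hc
  have hev2 := (ha.mul_const (M : ℝ)).eventually (eventually_lt_nhds hc)
  obtain ⟨n, hn1, hn2⟩ := (hfm.and_eventually hev2).exists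
  linarith

/-- The set of (α, β) with α ≥ 0 or β ≥ 0 satisfying the nonnegative commutator
relation [f_α, f_β] ≥ 0 is a closed subset of ℝ². -/
theorem nonneg_commutator_set_closed :
    IsClosed {p : ℝ × ℝ | (0 ≤ p.1 ∨ 0 ≤ p.2) ∧
      ∀ x : ℝ, ⌊p.1 * (⌊p.2 * x⌋ : ℝ)⌋ ≥ ⌊p.2 * (⌊p.1 * x⌋ : ℝ)⌋} := by
  rw [← isSeqClosed_iff_isClosed]
  intro u p hu hup
  have ha : Tendsto (fun n => (u n).1) atTop (𝓝 p.1) := (continuous_fst.tendsto p).comp hup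
  have hb : Tendsto (fun n => (u n).2) atTop (𝓝 p.2) := (continuous_snd.tendsto p).comp hup
  have hS : ∀ n, ∀ x : ℝ, ⌊(u n).1 * (⌊(u n).2 * x⌋ : ℝ)⌋ ≥ ⌊(u n).2 * (⌊(u n).1 * x⌋ : ℝ)⌋ :=
    fun n => (hu n).2
  have hsign : 0 ≤ p.1 ∨ 0 ≤ p.2 := by
    have hc : IsClosed {q : ℝ × ℝ | 0 ≤ q.1 ∨ 0 ≤ q.2} :=
      (isClosed_le continuous_const continuous_fst).union
        (isClosed_le continuous_const continuous_snd)
    exact hc.mem_of_tendsto hup (Eventually.of_forall fun n => (hu n).1)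
  refine ⟨hsign, fun x => ?_⟩
  by_cases hα0 : p.1 = 0
  · simp [hα0]
  by_cases hβ0 : p.2 = 0
  · simp [hβ0]
  rcases lt_trichotomy p.1 0 with hα | hα | hα
  · -- p.1 < 0, hence 0 ≤ p.2 and the inequality holds pointwise by monotonicity
    have hβ : 0 ≤ p.2 := hsign.resolve_left (by linarith)
    rw [ge_iff_le]
    apply Int.floor_mono
    have t1 : p.2 * (⌊p.1 * x⌋ : ℝ) ≤ p.2 * (p.1 * x) :=
      mul_le_mul_of_nonneg_left (Int.floor_le _) hβ
    have t2 : p.1 * (p.2 * x) ≤ p.1 * (⌊p.2 * x⌋ : ℝ) :=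
      mul_le_mul_of_nonpos_left (Int.floor_le _) hα.le
    calc p.2 * (⌊p.1 * x⌋ : ℝ) ≤ p.2 * (p.1 * x) := t1
      _ = p.1 * (p.2 * x) := by ring
      _ ≤ p.1 * (⌊p.2 * x⌋ : ℝ) := t2
  · exact absurd hα hα0
  · rcases lt_trichotomy p.2 0 with hβ | hβ | hβ
    · -- impossible: points with positive first and negative second coordinate
      -- always violate the commutator relation
      exfalso
      have hpa := ha.eventually (eventually_gt_nhds hα)
      have hpb := hb.eventually (eventually_lt_nhds hβ)
      obtain ⟨n, h1, h2⟩ := (hpa.and hpb).exists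
      set c := (u n).1 with hcdef
      set d := (u n).2 with hddef
      have hx := hS n (1 / (2 * c))
      simp only [← hcdef, ← hddef] at hx
      have hcne : c ≠ 0 := ne_of_gt h1
      have e1 : c * (1 / (2 * c)) = 1 / 2 := by field_simp
      have e2 : ⌊c * (1 / (2 * c))⌋ = 0 := by
        rw [e1, Int.floor_eq_zero_iff]
        constructor <;> norm_num
      rw [e2] at hx
      have hdx : d * (1 / (2 * c)) < 0 := mul_neg_of_neg_of_pos h2 (by positivity)
      have hm : ⌊d * (1 / (2 * c))⌋ ≤ -1 := by
        have := Int.floor_lt.mpr (show d * (1 / (2 * c)) < ((0 : ℤ) : ℝ) by exact_mod_cast hdx)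
        omega
      have hmr : ((⌊d * (1 / (2 * c))⌋ : ℤ) : ℝ) ≤ -1 := by exact_mod_cast hm
      have hcm : c * ((⌊d * (1 / (2 * c))⌋ : ℤ) : ℝ) < 0 := by nlinarith
      have hL : ⌊c * ((⌊d * (1 / (2 * c))⌋ : ℤ) : ℝ)⌋ < 0 :=
        Int.floor_lt.mpr (by exact_mod_cast hcm)
      simp only [Int.cast_zero, mul_zero, Int.floor_zero] at hx
      omega
    · exact absurd hβ hβ0
    · -- main case: both limits positive
      by_contra hcon
      push_neg at hcon
      set α := p.1 with hαdef
      set β := p.2 with hβdef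
      set k := ⌊α * x⌋ with hk
      set m := ⌊β * x⌋ with hm
      set j := ⌊β * (k : ℝ)⌋ with hj
      have hαm : α * m < (j : ℝ) := Int.floor_lt.mp hcon
      have hjβk : (j : ℝ) ≤ β * k := Int.floor_le _
      have e1 : (k : ℝ) ≤ α * x := Int.floor_le _
      have e2 : α * x < (k : ℝ) + 1 := Int.lt_floor_add_one _
      have e3 : (m : ℝ) ≤ β * x := Int.floor_le _
      have e4 : β * x < (m : ℝ) + 1 := Int.lt_floor_add_one _
      have t1 := mul_le_mul_of_nonneg_left e1 hβ.le
      have t2 := mul_lt_mul_of_pos_left e4 hα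
      have t3 := mul_le_mul_of_nonneg_left e3 hα.le
      have t4 := mul_lt_mul_of_pos_left e2 hβ
      have h1 : β * (k : ℝ) < α * ((m : ℝ) + 1) := by nlinarith
      have h2 : α * (m : ℝ) < β * ((k : ℝ) + 1) := by nlinarith
      by_cases hfreq : ∃ᶠ n in atTop, (j : ℝ) ≤ (u n).2 * (k : ℝ)
      · have hkey := key_lemma (fun n => (u n).1) (fun n => (u n).2) α β ha hb hS hα hβ
          k m j h1 h2 hfreq
        linarith
      · have hev : ∀ᶠ n in atTop, (u n).2 * (k : ℝ) < j :=
          (Filter.not_frequently.mp hfreq).mono fun n hn => not_le.mp hn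
        have hβk_le : β * (k : ℝ) ≤ j :=
          le_of_tendsto (hb.mul_const (k : ℝ)) (hev.mono fun n hn => hn.le)
        have hβk : β * (k : ℝ) = j := le_antisymm hβk_le hjβk
        have hfreq2 : ∃ᶠ n in atTop, ((-j : ℤ) : ℝ) ≤ (u n).2 * ((-k : ℤ) : ℝ) := by
          apply (hev.mono ?_).frequently
          intro n hn
          push_cast
          nlinarith
        have r1 : β * ((-k : ℤ) : ℝ) < α * (((-m - 1 : ℤ) : ℝ) + 1) := by
          push_cast
          nlinarith
        have r2 : α * ((-m - 1 : ℤ) : ℝ) < β * (((-k : ℤ) : ℝ) + 1) := by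
          push_cast
          nlinarith
        have hkey := key_lemma (fun n => (u n).1) (fun n => (u n).2) α β ha hb hS hα hβ
          (-k) (-m - 1) (-j) r1 r2 hfreq2
        push_cast at hkey
        nlinarith
end

section
/- Let α, β be real numbers with α > 0 and β > 0. If ⌊α·⌊β·x⌋⌋ ≥ ⌊β·⌊α·x⌋⌋ for all real x, then ⌊(α/β)·⌊(1/β)·x⌋⌋ ≥ ⌊(1/β)·⌊(α/β)·x⌋⌋ for all real x. That is, the positive-dilation part of the nonnegative commutator set S is invariant under the birational involution (α, β) ↦ (α/β, 1/β). -/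
/-- First quadrant birational symmetry of S: for α, β > 0, if (α, β) ∈ S then
(α/β, 1/β) ∈ S. -/
theorem birational_symmetry_of_S (α β : ℝ) (hα : 0 < α) (hβ : 0 < β)
    (h : ∀ x : ℝ, ⌊α * (⌊β * x⌋ : ℝ)⌋ ≥ ⌊β * (⌊α * x⌋ : ℝ)⌋) :
    ∀ x : ℝ, ⌊(α / β) * (⌊(1 / β) * x⌋ : ℝ)⌋ ≥ ⌊(1 / β) * (⌊(α / β) * x⌋ : ℝ)⌋ := by
  intro x
  set p : ℤ := ⌊(α / β) * x⌋ with hp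
  set m : ℤ := ⌊(1 / β) * (p : ℝ)⌋ with hm
  set c : ℤ := ⌈β * (m : ℝ) / α⌉ with hc
  have hα0 : α ≠ 0 := ne_of_gt hα
  have hβ0 : β ≠ 0 := ne_of_gt hβ
  -- apply hypothesis at -m/α
  have h1 := h (-(m : ℝ) / α)
  have e1 : α * (-(m : ℝ) / α) = ((-m : ℤ) : ℝ) := by push_cast; field_simp
  have e2 : β * (-(m : ℝ) / α) = -(β * (m : ℝ) / α) := by ring
  rw [e1, e2, Int.floor_intCast, Int.floor_neg] at h1
  -- h1 : ⌊α * ((-⌈β*m/α⌉ : ℤ) : ℝ)⌋ ≥ ⌊β * ((-m : ℤ) : ℝ)⌋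
  have e3 : α * ((-⌈β * (m : ℝ) / α⌉ : ℤ) : ℝ) = -(α * (c : ℝ)) := by
    rw [← hc]; push_cast; ring
  have e4 : β * ((-m : ℤ) : ℝ) = -(β * (m : ℝ)) := by push_cast; ring
  rw [e3, e4, Int.floor_neg, Int.floor_neg] at h1
  have h1 : ⌈α * (c : ℝ)⌉ ≤ ⌈β * (m : ℝ)⌉ := by omega
  have hbm_le_p : β * (m : ℝ) ≤ (p : ℝ) := by
    have := Int.floor_le ((1 / β) * (p : ℝ))
    rw [← hm] at this
    calc β * (m : ℝ) ≤ β * ((1 / β) * (p : ℝ)) := by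
          exact mul_le_mul_of_nonneg_left this (le_of_lt hβ)
      _ = (p : ℝ) := by field_simp
  have h2 : (⌈β * (m : ℝ)⌉ : ℤ) ≤ p := Int.ceil_le.mpr hbm_le_p
  have h3 : α * (c : ℝ) ≤ (p : ℝ) := by
    calc α * (c : ℝ) ≤ (⌈α * (c : ℝ)⌉ : ℝ) := Int.le_ceil _
      _ ≤ (p : ℝ) := by exact_mod_cast le_trans h1 h2
  have hpx : (p : ℝ) / α ≤ x / β := by
    have := Int.floor_le ((α / β) * x)
    rw [← hp] at this
    rw [div_le_div_iff₀ hα hβ]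
    calc (p : ℝ) * β ≤ ((α / β) * x) * β := by
          exact mul_le_mul_of_nonneg_right this (le_of_lt hβ)
      _ = x * α := by field_simp
  have h4 : (c : ℝ) ≤ (1 / β) * x := by
    have : (c : ℝ) ≤ (p : ℝ) / α := by
      rw [le_div_iff₀ hα]; linarith [h3]
    calc (c : ℝ) ≤ (p : ℝ) / α := this
      _ ≤ x / β := hpx
      _ = (1 / β) * x := by ring
  have h5 : c ≤ ⌊(1 / β) * x⌋ := Int.le_floor.mpr h4
  -- now conclude
  have hbm_le_ac : β * (m : ℝ) ≤ α * (c : ℝ) := by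
    have := Int.le_ceil (β * (m : ℝ) / α)
    rw [← hc] at this
    calc β * (m : ℝ) = (β * (m : ℝ) / α) * α := by field_simp
      _ ≤ (c : ℝ) * α := mul_le_mul_of_nonneg_right this (le_of_lt hα)
      _ = α * (c : ℝ) := by ring
  have hfinal : (m : ℝ) ≤ (α / β) * (⌊(1 / β) * x⌋ : ℝ) := by
    have hc_le : (c : ℝ) ≤ (⌊(1 / β) * x⌋ : ℝ) := by exact_mod_cast h5
    have : (α / β) * (c : ℝ) ≤ (α / β) * (⌊(1 / β) * x⌋ : ℝ) :=
      mul_le_mul_of_nonneg_left hc_le (le_of_lt (div_pos hα hβ))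
    have hmc : (m : ℝ) ≤ (α / β) * (c : ℝ) := by
      rw [div_mul_eq_mul_div, le_div_iff₀ hβ]
      linarith [hbm_le_ac]
    linarith
  exact Int.le_floor.mpr hfinal
end

section
/- Let α, β be nonzero real numbers. Then ⌊α·⌊β·x⌋⌋ ≥ ⌊β·⌊α·x⌋⌋ holds for all real x if and only if ⌊α·⌊y/α⌋⌋ ≥ ⌊β·⌊y/β⌋⌋ holds for all real y. -/
/-- Separation of variables criterion: for nonzero α, β, the nonnegative commutator
relation [f_α, f_β] ≥ 0 holds iff ⌊α·⌊y/α⌋⌋ ≥ ⌊β·⌊y/β⌋⌋ for all real y. -/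
theorem separation_of_variables (α β : ℝ) (hα : α ≠ 0) (hβ : β ≠ 0) :
    (∀ x : ℝ, ⌊α * (⌊β * x⌋ : ℝ)⌋ ≥ ⌊β * (⌊α * x⌋ : ℝ)⌋) ↔
      (∀ y : ℝ, ⌊α * (⌊y / α⌋ : ℝ)⌋ ≥ ⌊β * (⌊y / β⌋ : ℝ)⌋) := by
  constructor
  · intro h y
    have := h (y / (α * β))
    rw [show β * (y / (α * β)) = y / α by field_simp,
        show α * (y / (α * β)) = y / β by field_simp] at this
    exact this
  · intro h x
    have := h (α * β * x)
    rw [show α * β * x / α = β * x by field_simp,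
        show α * β * x / β = α * x by field_simp] at this
    exact this
end

section
/- Let α, β be real numbers with α > 0 and β > 0. Then α·⌊x/α⌋ ≤ β·⌊x/β⌋ holds for all real x if and only if there exists an integer m ≥ 1 such that α = m·β. -/
/-- Rounding function ordering (lower): for α, β > 0, the inequality
α·⌊x/α⌋ ≤ β·⌊x/β⌋ holds for all x iff α = m·β for some integer m ≥ 1. -/
theorem lower_rounding_ordering (α β : ℝ) (hα : 0 < α) (hβ : 0 < β) :
    (∀ x : ℝ, α * (⌊x / α⌋ : ℝ) ≤ β * (⌊x / β⌋ : ℝ)) ↔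
      ∃ m : ℤ, 1 ≤ m ∧ α = (m : ℝ) * β := by
  constructor
  · intro h
    have h1 := h α
    rw [div_self hα.ne'] at h1
    simp at h1
    -- h1 : α ≤ β * ⌊α/β⌋
    have h2 : α / β ≤ (⌊α / β⌋ : ℝ) := by
      rw [div_le_iff₀ hβ]; linarith [h1]
    have h3 : (⌊α / β⌋ : ℝ) ≤ α / β := Int.floor_le _
    have heq : (⌊α / β⌋ : ℝ) = α / β := le_antisymm h3 h2
    refine ⟨⌊α / β⌋, ?_, ?_⟩
    · have : (0 : ℝ) < ⌊α / β⌋ := by rw [heq]; positivity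
      exact_mod_cast this
    · field_simp at heq
      linarith [heq]
  · rintro ⟨m, hm, rfl⟩ x
    have hm' : (0 : ℝ) < (m : ℝ) := by exact_mod_cast lt_of_lt_of_le one_pos hm
    set y : ℝ := x / β with hy
    have key : x / ((m : ℝ) * β) = y / (m : ℝ) := by
      rw [hy, div_div, mul_comm]
    rw [key]
    have hint : (m * ⌊y / (m : ℝ)⌋ : ℤ) ≤ ⌊y⌋ := by
      apply Int.le_floor.mpr
      push_cast
      calc (m : ℝ) * (⌊y / (m : ℝ)⌋ : ℝ) ≤ (m : ℝ) * (y / (m : ℝ)) :=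
            mul_le_mul_of_nonneg_left (Int.floor_le _) hm'.le
        _ = y := by field_simp
    have hreal : (m : ℝ) * (⌊y / (m : ℝ)⌋ : ℝ) ≤ (⌊y⌋ : ℝ) := by exact_mod_cast hint
    calc (m : ℝ) * β * (⌊y / (m : ℝ)⌋ : ℝ)
        = β * ((m : ℝ) * (⌊y / (m : ℝ)⌋ : ℝ)) := by ring
      _ ≤ β * (⌊y⌋ : ℝ) := mul_le_mul_of_nonneg_left hreal hβ.le
end

section
/- Let α, β be real numbers with α > 0 and β > 0. Then α·⌈x/α⌉ ≤ β·⌈x/β⌉ holds for all real x if and only if there exists an integer m ≥ 1 such that β = m·α. -/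
/-- Rounding function ordering (upper): for α, β > 0, the inequality
α·⌈x/α⌉ ≤ β·⌈x/β⌉ holds for all x iff β = m·α for some integer m ≥ 1. -/
theorem upper_rounding_ordering (α β : ℝ) (hα : 0 < α) (hβ : 0 < β) :
    (∀ x : ℝ, α * (⌈x / α⌉ : ℝ) ≤ β * (⌈x / β⌉ : ℝ)) ↔
      ∃ m : ℤ, 1 ≤ m ∧ β = (m : ℝ) * α := by
  constructor
  · intro h
    have h1 := h β
    rw [div_self hβ.ne'] at h1
    norm_num at h1
    have h2 : β ≤ α * (⌈β / α⌉ : ℝ) := by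
      have := Int.le_ceil (β / α)
      calc β = α * (β / α) := by field_simp
        _ ≤ α * (⌈β / α⌉ : ℝ) := by
          exact mul_le_mul_of_nonneg_left this hα.le
    have heq : α * (⌈β / α⌉ : ℝ) = β := le_antisymm h1 h2
    refine ⟨⌈β / α⌉, ?_, by linarith [heq]⟩
    have : (0:ℝ) < β / α := div_pos hβ hα
    exact Int.ceil_pos.mpr this
  · rintro ⟨m, hm, rfl⟩
    intro x
    have hm' : (0:ℝ) < (m:ℝ) := by exact_mod_cast hm.trans_lt' zero_lt_one
    have key : (⌈x / α⌉ : ℤ) ≤ m * ⌈x / ((m:ℝ) * α)⌉ := by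
      rw [Int.ceil_le]
      push_cast
      have h1 : x / ((m:ℝ) * α) ≤ (⌈x / ((m:ℝ) * α)⌉ : ℝ) := Int.le_ceil _
      have : x / α = (m:ℝ) * (x / ((m:ℝ) * α)) := by field_simp
      rw [this]
      exact mul_le_mul_of_nonneg_left h1 hm'.le
    have : (⌈x / α⌉ : ℝ) ≤ (m:ℝ) * (⌈x / ((m:ℝ) * α)⌉ : ℝ) := by exact_mod_cast key
    calc α * (⌈x / α⌉ : ℝ) ≤ α * ((m:ℝ) * (⌈x / ((m:ℝ) * α)⌉ : ℝ)) :=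
          mul_le_mul_of_nonneg_left this hα.le
      _ = (m:ℝ) * α * (⌈x / ((m:ℝ) * α)⌉ : ℝ) := by ring
end

section
/- Let α, β be real numbers with α > 0 and β > 0. Then ⌊α·⌊β·x⌋⌋ ≥ ⌊β·⌊α·x⌋⌋ holds for all real x if and only if α·⌈n/α⌉ ≤ β·⌈n/β⌉ holds for all integers n. -/
/-- Rounding function criterion: for α, β > 0, the nonnegative commutator relation
[f_α, f_β] ≥ 0 holds iff α·⌈n/α⌉ ≤ β·⌈n/β⌉ for all integers n. -/
theorem rounding_function_criterion (α β : ℝ) (hα : 0 < α) (hβ : 0 < β) :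
    (∀ x : ℝ, ⌊α * (⌊β * x⌋ : ℝ)⌋ ≥ ⌊β * (⌊α * x⌋ : ℝ)⌋) ↔
      (∀ n : ℤ, α * (⌈(n : ℝ) / α⌉ : ℝ) ≤ β * (⌈(n : ℝ) / β⌉ : ℝ)) := by
  constructor
  · intro h n
    set x : ℝ := (⌈(n : ℝ) / β⌉ : ℝ) / α with hxdef
    have hx := h x
    have hax : α * x = (⌈(n : ℝ) / β⌉ : ℝ) := by
      rw [hxdef]; field_simp [hα.ne']
    rw [hax, Int.floor_intCast] at hx
    have h1 : (n : ℝ) ≤ β * (⌈(n : ℝ) / β⌉ : ℝ) := by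
      have := Int.le_ceil ((n : ℝ) / β)
      rw [div_le_iff₀ hβ] at this
      linarith [this, mul_comm (β : ℝ) ((⌈(n : ℝ) / β⌉ : ℤ) : ℝ)]
    have h2 : n ≤ ⌊α * (⌊β * x⌋ : ℝ)⌋ := le_trans (Int.le_floor.mpr h1) hx
    have h3 : (n : ℝ) ≤ α * (⌊β * x⌋ : ℝ) := Int.le_floor.mp h2
    have h4 : ⌈(n : ℝ) / α⌉ ≤ ⌊β * x⌋ := by
      apply Int.ceil_le.mpr
      rw [div_le_iff₀ hα, mul_comm]
      exact h3
    have h5 : ((⌈(n : ℝ) / α⌉ : ℤ) : ℝ) ≤ β * x := by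
      calc ((⌈(n : ℝ) / α⌉ : ℤ) : ℝ) ≤ ((⌊β * x⌋ : ℤ) : ℝ) := by exact_mod_cast h4
        _ ≤ β * x := Int.floor_le _
    have hx2 : β * x = β * (⌈(n : ℝ) / β⌉ : ℝ) / α := by
      rw [hxdef]; ring
    rw [hx2] at h5
    rw [le_div_iff₀ hα] at h5
    nlinarith [h5]
  · intro h x
    set n : ℤ := ⌊β * (⌊α * x⌋ : ℝ)⌋ with hndef
    have h1 : (n : ℝ) ≤ β * (⌊α * x⌋ : ℝ) := Int.floor_le _
    have h2 : ⌈(n : ℝ) / β⌉ ≤ ⌊α * x⌋ := by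
      apply Int.ceil_le.mpr
      rw [div_le_iff₀ hβ, mul_comm]
      exact h1
    have h3 : ((⌈(n : ℝ) / β⌉ : ℤ) : ℝ) ≤ α * x := by
      calc ((⌈(n : ℝ) / β⌉ : ℤ) : ℝ) ≤ ((⌊α * x⌋ : ℤ) : ℝ) := by exact_mod_cast h2
        _ ≤ α * x := Int.floor_le _
    have hn := h n
    have h4 : ((⌈(n : ℝ) / α⌉ : ℤ) : ℝ) ≤ β * x := by
      nlinarith [mul_le_mul_of_nonneg_left h3 hβ.le]
    have h5 : ⌈(n : ℝ) / α⌉ ≤ ⌊β * x⌋ := Int.le_floor.mpr h4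
    have h6 : (n : ℝ) ≤ α * (⌈(n : ℝ) / α⌉ : ℝ) := by
      have := Int.le_ceil ((n : ℝ) / α)
      rw [div_le_iff₀ hα] at this
      linarith [mul_comm (α : ℝ) ((⌈(n : ℝ) / α⌉ : ℤ) : ℝ)]
    have h7 : (n : ℝ) ≤ α * (⌊β * x⌋ : ℝ) := by
      have : ((⌈(n : ℝ) / α⌉ : ℤ) : ℝ) ≤ ((⌊β * x⌋ : ℤ) : ℝ) := by exact_mod_cast h5
      nlinarith
    exact Int.le_floor.mpr h7
end

section
/- Let μ, ν be real numbers with μ > 0 and ν > 0. Then ⌊(1/μ)·⌊(ν/μ)·x⌋⌋ ≥ ⌊(ν/μ)·⌊(1/μ)·x⌋⌋ holds for all real x if and only if for all integers m, n it is not the case that ⌊n·ν⌋ < m·μ < ⌈n·ν⌉ (as inequalities of real numbers). Equivalently, the rectangular lattice μℤ × νℤ in ℝ² is disjoint from the enlarged diagonal region D = { (x, y) : ⌊y⌋ < x < ⌈y⌉ }. -/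
/-- Auxiliary: if `⌊nν⌋ < mμ ≤ nν`, then the commutator inequality fails at `x = nμ`. -/
lemma lattice_aux (μ ν : ℝ) (hμ : 0 < μ) (m n : ℤ)
    (h1 : (⌊(n : ℝ) * ν⌋ : ℝ) < (m : ℝ) * μ) (h2 : (m : ℝ) * μ ≤ (n : ℝ) * ν) :
    ⌊(1 / μ) * (⌊(ν / μ) * ((n : ℝ) * μ)⌋ : ℝ)⌋ <
      ⌊(ν / μ) * (⌊(1 / μ) * ((n : ℝ) * μ)⌋ : ℝ)⌋ := by
  have hμ' : μ ≠ 0 := ne_of_gt hμ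
  have e1 : (1 / μ) * ((n : ℝ) * μ) = (n : ℝ) := by field_simp
  have e2 : (ν / μ) * ((n : ℝ) * μ) = (n : ℝ) * ν := by field_simp
  rw [e1, e2, Int.floor_intCast]
  have hm : m ≤ ⌊(ν / μ) * ((n : ℤ) : ℝ)⌋ := by
    apply Int.le_floor.2
    rw [show (ν / μ) * ((n : ℤ) : ℝ) = ((n : ℝ) * ν) / μ by push_cast; ring,
      le_div_iff₀ hμ]
    exact h2
  have hl : ⌊(1 / μ) * (⌊(n : ℝ) * ν⌋ : ℝ)⌋ < m := by
    apply Int.floor_lt.2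
    rw [show (1 / μ) * (⌊(n : ℝ) * ν⌋ : ℝ) = (⌊(n : ℝ) * ν⌋ : ℝ) / μ by ring,
      div_lt_iff₀ hμ]
    exact h1
  exact lt_of_lt_of_le hl hm

/-- Lattice disjointness criterion: for μ, ν > 0, [f_{1/μ}, f_{ν/μ}] ≥ 0 holds iff
the lattice μℤ × νℤ is disjoint from the enlarged diagonal region
D = { (x, y) : ⌊y⌋ < x < ⌈y⌉ }. -/
theorem lattice_disjointness_criterion (μ ν : ℝ) (hμ : 0 < μ) (hν : 0 < ν) :
    (∀ x : ℝ, ⌊(1 / μ) * (⌊(ν / μ) * x⌋ : ℝ)⌋ ≥ ⌊(ν / μ) * (⌊(1 / μ) * x⌋ : ℝ)⌋) ↔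
      ∀ m n : ℤ, ¬ ((⌊(n : ℝ) * ν⌋ : ℝ) < (m : ℝ) * μ ∧
        (m : ℝ) * μ < (⌈(n : ℝ) * ν⌉ : ℝ)) := by
  have hμ' : μ ≠ 0 := ne_of_gt hμ
  constructor
  · intro hC m n ⟨h1, h2⟩
    rcases le_or_gt ((m : ℝ) * μ) ((n : ℝ) * ν) with hle | hlt
    · exact (lattice_aux μ ν hμ m n h1 hle).not_ge (hC ((n : ℝ) * μ))
    · have h1' : (⌊((-n : ℤ) : ℝ) * ν⌋ : ℝ) < ((-m : ℤ) : ℝ) * μ := by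
        have : ((-n : ℤ) : ℝ) * ν = -((n : ℝ) * ν) := by push_cast; ring
        rw [this, Int.floor_neg]
        push_cast
        linarith
      have h2' : ((-m : ℤ) : ℝ) * μ ≤ ((-n : ℤ) : ℝ) * ν := by
        push_cast; linarith
      exact (lattice_aux μ ν hμ (-m) (-n) h1' h2').not_ge (hC (((-n : ℤ) : ℝ) * μ))
  · intro hL x
    set p : ℤ := ⌊(1 / μ) * x⌋ with hp
    set q : ℤ := ⌊(ν / μ) * (p : ℝ)⌋ with hq
    -- Step 1 : q * μ ≤ p * ν
    have hqp : (q : ℝ) * μ ≤ (p : ℝ) * ν := by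
      have h1 : (q : ℝ) ≤ (ν / μ) * (p : ℝ) := Int.floor_le _
      have h2 := mul_le_mul_of_nonneg_right h1 hμ.le
      have e : (ν / μ) * (p : ℝ) * μ = (p : ℝ) * ν := by field_simp
      linarith [e ▸ h2]
    -- Step 2 : q * μ ≤ ⌊p ν⌋
    have hqf : (q : ℝ) * μ ≤ (⌊(p : ℝ) * ν⌋ : ℝ) := by
      by_contra hcon
      push_neg at hcon
      apply hL q p
      refine ⟨hcon, ?_⟩
      rcases eq_or_lt_of_le hqp with heq | hlt2
      · exfalso
        by_cases hc : ((p : ℝ) * ν) < (⌈(p : ℝ) * ν⌉ : ℝ)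
        · exact absurd ⟨hcon, heq ▸ hc⟩ (hL q p)
        · push_neg at hc
          have hceq : (⌈(p : ℝ) * ν⌉ : ℝ) = (p : ℝ) * ν := le_antisymm hc (Int.le_ceil _)
          have : (⌊(p : ℝ) * ν⌋ : ℝ) = (p : ℝ) * ν := by
            rw [← hceq, Int.floor_intCast]
          linarith [heq, hcon, this]
      · exact lt_of_lt_of_le hlt2 (Int.le_ceil _)
    -- Step 3 : p * μ ≤ x
    have hpx : (p : ℝ) * μ ≤ x := by
      have h1 : (p : ℝ) ≤ (1 / μ) * x := Int.floor_le _
      have h2 := mul_le_mul_of_nonneg_right h1 hμ.le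
      have e : (1 / μ) * x * μ = x := by field_simp
      linarith [e ▸ h2]
    -- Step 4 : p * ν ≤ (ν/μ) * x
    have hpv : (p : ℝ) * ν ≤ (ν / μ) * x := by
      have hpos : (0 : ℝ) ≤ ν / μ := le_of_lt (div_pos hν hμ)
      have h2 := mul_le_mul_of_nonneg_left hpx hpos
      have e : (ν / μ) * ((p : ℝ) * μ) = (p : ℝ) * ν := by field_simp
      linarith [e ▸ h2]
    -- Step 5 : conclude
    have hff : (⌊(p : ℝ) * ν⌋ : ℝ) ≤ (⌊(ν / μ) * x⌋ : ℝ) := by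
      exact_mod_cast Int.floor_le_floor hpv
    apply Int.le_floor.2
    rw [show (1 / μ) * (⌊(ν / μ) * x⌋ : ℝ) = (⌊(ν / μ) * x⌋ : ℝ) / μ by ring,
      le_div_iff₀ hμ]
    linarith
end

section
/- Let μ, ν be real numbers with μ > 0 and ν > 0. Then ⌊(1/μ)·⌊(ν/μ)·x⌋⌋ ≥ ⌊(ν/μ)·⌊(1/μ)·x⌋⌋ holds for all real x if and only if the reduced Beatty sequences B₀(μ) and B₀(ν) over ℤ are disjoint. -/
/-- The reduced Beatty sequence over ℤ of a positive real u:
B₀(u) = { ⌊n·u⌋ : n ∈ ℤ, n·u ∉ ℤ }. -/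
def reducedBeatty (u : ℝ) : Set ℤ :=
  {k : ℤ | ∃ n : ℤ, (n : ℝ) * u ∉ Set.range ((↑) : ℤ → ℝ) ∧ ⌊(n : ℝ) * u⌋ = k}

lemma mem_reducedBeatty {u : ℝ} {k : ℤ} :
    k ∈ reducedBeatty u ↔ ∃ n : ℤ, (k : ℝ) < n * u ∧ (n : ℝ) * u < k + 1 := by
  constructor
  · rintro ⟨n, hn, hk⟩
    refine ⟨n, ?_, ?_⟩
    · rcases lt_or_eq_of_le (hk ▸ Int.floor_le ((n : ℝ) * u)) with h | h
      · exact h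
      · exact absurd ⟨k, h⟩ hn
    · have := Int.lt_floor_add_one ((n : ℝ) * u)
      rw [hk] at this
      exact_mod_cast this
  · rintro ⟨n, h1, h2⟩
    refine ⟨n, ?_, ?_⟩
    · rintro ⟨t, ht⟩
      rw [← ht] at h1 h2
      have h1' : k < t := by exact_mod_cast h1
      have h2' : t < k + 1 := by exact_mod_cast h2
      omega
    · rw [Int.floor_eq_iff]
      exact ⟨le_of_lt h1, h2⟩

/-- From a "triple" n < kμ ≤ mν < n+1 one builds a point violating the inequality. -/
lemma triple_to_violation (μ ν : ℝ) (hμ : 0 < μ) (hν : 0 < ν) (k m n : ℤ)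
    (h1 : (n : ℝ) < k * μ) (h2 : (k : ℝ) * μ ≤ m * ν) (h3 : (m : ℝ) * ν < n + 1) :
    ∃ x : ℝ, ⌊(1 / μ) * (⌊(ν / μ) * x⌋ : ℝ)⌋ < ⌊(ν / μ) * (⌊(1 / μ) * x⌋ : ℝ)⌋ := by
  refine ⟨max ((m : ℝ) * μ) ((n : ℝ) * μ / ν), ?_⟩
  set x := max ((m : ℝ) * μ) ((n : ℝ) * μ / ν) with hx
  have hxm : (m : ℝ) * μ ≤ x := le_max_left _ _
  have hxn : (n : ℝ) * μ / ν ≤ x := le_max_right _ _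
  have hnν : (n : ℝ) * μ ≤ ν * x := by
    have := (div_le_iff₀ hν).mp hxn
    nlinarith
  have hxm1 : x < ((m : ℝ) + 1) * μ := by
    apply max_lt
    · nlinarith
    · rw [div_lt_iff₀ hν]
      nlinarith
  have hxn1 : ν * x < ((n : ℝ) + 1) * μ := by
    have : x < ((n : ℝ) + 1) * μ / ν := by
      apply max_lt
      · rw [lt_div_iff₀ hν]; nlinarith
      · rw [div_lt_div_iff₀ hν hν]; nlinarith
    have := (lt_div_iff₀ hν).mp this
    linarith
  have hm : ⌊(1 / μ) * x⌋ = m := by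
    rw [Int.floor_eq_iff]
    constructor
    · rw [one_div, inv_mul_eq_div, le_div_iff₀ hμ]; linarith
    · rw [one_div, inv_mul_eq_div, div_lt_iff₀ hμ]; linarith
  have hn : ⌊(ν / μ) * x⌋ = n := by
    rw [Int.floor_eq_iff]
    constructor
    · rw [div_mul_eq_mul_div, le_div_iff₀ hμ]; linarith
    · rw [div_mul_eq_mul_div, div_lt_iff₀ hμ]; linarith
  rw [hm, hn]
  have hlt : ⌊(1 / μ) * (n : ℝ)⌋ < k := by
    rw [Int.floor_lt, one_div, inv_mul_eq_div, div_lt_iff₀ hμ]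
    push_cast
    linarith
  have hle : (k : ℤ) ≤ ⌊(ν / μ) * (m : ℝ)⌋ := by
    rw [Int.le_floor, div_mul_eq_mul_div, le_div_iff₀ hμ]
    push_cast
    linarith
  omega

/-- From a violation one extracts a triple n < kμ ≤ mν < n+1. -/
lemma violation_to_triple (μ ν : ℝ) (hμ : 0 < μ) (hν : 0 < ν) (x : ℝ)
    (h : ⌊(1 / μ) * (⌊(ν / μ) * x⌋ : ℝ)⌋ < ⌊(ν / μ) * (⌊(1 / μ) * x⌋ : ℝ)⌋) :
    ∃ k m n : ℤ, (n : ℝ) < k * μ ∧ (k : ℝ) * μ ≤ m * ν ∧ (m : ℝ) * ν < n + 1 := by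
  set m := ⌊(1 / μ) * x⌋ with hm
  set n := ⌊(ν / μ) * x⌋ with hn
  refine ⟨⌊(ν / μ) * (m : ℝ)⌋, m, n, ?_, ?_, ?_⟩
  · have h1 : (1 / μ) * (n : ℝ) < (⌊(ν / μ) * (m : ℝ)⌋ : ℝ) := by
      have := Int.lt_floor_add_one ((1 / μ) * (n : ℝ))
      have hc : (⌊(1 / μ) * (n : ℝ)⌋ : ℝ) + 1 ≤ (⌊(ν / μ) * (m : ℝ)⌋ : ℝ) := by
        exact_mod_cast h
      linarith
    rw [one_div, inv_mul_eq_div, div_lt_iff₀ hμ] at h1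
    linarith
  · have h2 : (⌊(ν / μ) * (m : ℝ)⌋ : ℝ) ≤ (ν / μ) * (m : ℝ) := Int.floor_le _
    have hμ0 : μ ≠ 0 := hμ.ne'
    have he : (ν / μ) * (m : ℝ) * μ = (m : ℝ) * ν := by field_simp
    nlinarith [mul_le_mul_of_nonneg_right h2 hμ.le]
  · have h3 : (m : ℝ) ≤ (1 / μ) * x := Int.floor_le _
    have h4 : (ν / μ) * x < (n : ℝ) + 1 := Int.lt_floor_add_one _
    rw [one_div, inv_mul_eq_div, le_div_iff₀ hμ] at h3
    rw [div_mul_eq_mul_div, div_lt_iff₀ hμ] at h4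
    nlinarith

/-- Beatty disjointness criterion: for μ, ν > 0, [f_{1/μ}, f_{ν/μ}] ≥ 0 holds iff
the reduced Beatty sequences B₀(μ) and B₀(ν) over ℤ are disjoint. -/
theorem beatty_disjointness_criterion (μ ν : ℝ) (hμ : 0 < μ) (hν : 0 < ν) :
    (∀ x : ℝ, ⌊(1 / μ) * (⌊(ν / μ) * x⌋ : ℝ)⌋ ≥ ⌊(ν / μ) * (⌊(1 / μ) * x⌋ : ℝ)⌋) ↔
      Disjoint (reducedBeatty μ) (reducedBeatty ν) := by
  constructor
  · intro h
    rw [Set.disjoint_left]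
    intro a haμ haν
    obtain ⟨p, hp1, hp2⟩ := mem_reducedBeatty.mp haμ
    obtain ⟨q, hq1, hq2⟩ := mem_reducedBeatty.mp haν
    rcases le_or_gt ((p : ℝ) * μ) ((q : ℝ) * ν) with hc | hc
    · obtain ⟨x, hx⟩ := triple_to_violation μ ν hμ hν p q a hp1 hc hq2
      exact absurd (h x) (not_le.mpr hx)
    · obtain ⟨x, hx⟩ := triple_to_violation μ ν hμ hν (-p) (-q) (-(a + 1))
        (by push_cast; linarith) (by push_cast; linarith) (by push_cast; linarith)
      exact absurd (h x) (not_le.mpr hx)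
  · intro hd x
    by_contra hcon
    rw [not_le] at hcon
    obtain ⟨k, m, n, h1, h2, h3⟩ := violation_to_triple μ ν hμ hν x hcon
    have hnμ : n ∈ reducedBeatty μ := mem_reducedBeatty.mpr ⟨k, h1, by linarith⟩
    have hnν : n ∈ reducedBeatty ν := mem_reducedBeatty.mpr ⟨m, by linarith, h3⟩
    exact Set.disjoint_left.mp hd hnμ hnν
end

section
/- Let μ, ν be real numbers with μ > 0, ν > 0 and 1/μ + 1/ν = 1. Then for all integers m, n it is not the case that ⌊n·ν⌋ < m·μ and m·μ < ⌈n·ν⌉ (as inequalities of real numbers); that is, the rectangular lattice μℤ × νℤ is disjoint from the enlarged diagonal region D = { (x, y) : ⌊y⌋ < x < ⌈y⌉ }. -/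
/-- Rectangular hyperbola sufficiency: if μ, ν > 0 satisfy 1/μ + 1/ν = 1, then the
lattice μℤ × νℤ is disjoint from the enlarged diagonal region
D = { (x, y) : ⌊y⌋ < x < ⌈y⌉ }. -/
theorem hyperbola_lattice_disjoint (μ ν : ℝ) (hμ : 0 < μ) (hν : 0 < ν)
    (h : 1 / μ + 1 / ν = 1) :
    ∀ m n : ℤ, ¬ ((⌊(n : ℝ) * ν⌋ : ℝ) < (m : ℝ) * μ ∧
      (m : ℝ) * μ < (⌈(n : ℝ) * ν⌉ : ℝ)) := by
  rintro m n ⟨h1, h2⟩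
  set k : ℤ := ⌊(n : ℝ) * ν⌋ with hk
  have hc : ((⌈(n : ℝ) * ν⌉ : ℤ) : ℝ) ≤ (k : ℝ) + 1 := by
    exact_mod_cast Int.ceil_le_floor_add_one ((n : ℝ) * ν)
  have hf : (k : ℝ) ≤ (n : ℝ) * ν := Int.floor_le _
  have hf2 : (n : ℝ) * ν ≤ (⌈(n : ℝ) * ν⌉ : ℝ) := Int.le_ceil _
  have hm1 : (k : ℝ) / μ < m := (div_lt_iff₀ hμ).mpr h1
  have hm2 : (m : ℝ) < ((k : ℝ) + 1) / μ := (lt_div_iff₀ hμ).mpr (h2.trans_le hc)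
  have hn1 : (k : ℝ) / ν ≤ n := (div_le_iff₀ hν).mpr hf
  have hn2 : (n : ℝ) ≤ ((k : ℝ) + 1) / ν := (le_div_iff₀ hν).mpr (hf2.trans hc)
  have e1 : (k : ℝ) / μ + (k : ℝ) / ν = k := by
    have : (k : ℝ) / μ + (k : ℝ) / ν = k * (1 / μ + 1 / ν) := by ring
    rw [this, h, mul_one]
  have e2 : ((k : ℝ) + 1) / μ + ((k : ℝ) + 1) / ν = (k : ℝ) + 1 := by
    have : ((k : ℝ) + 1) / μ + ((k : ℝ) + 1) / ν = ((k : ℝ) + 1) * (1 / μ + 1 / ν) := by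
      ring
    rw [this, h, mul_one]
  have hlt1 : (k : ℝ) < (m : ℝ) + (n : ℝ) := by
    calc (k : ℝ) = (k : ℝ) / μ + (k : ℝ) / ν := e1.symm
    _ < (m : ℝ) + (n : ℝ) := add_lt_add_of_lt_of_le hm1 hn1
  have hlt2 : (m : ℝ) + (n : ℝ) < (k : ℝ) + 1 := by
    calc (m : ℝ) + (n : ℝ) < ((k : ℝ) + 1) / μ + ((k : ℝ) + 1) / ν :=
      add_lt_add_of_lt_of_le hm2 hn2
    _ = (k : ℝ) + 1 := e2
  have i1 : k < m + n := by exact_mod_cast hlt1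
  have i2 : m + n < k + 1 := by exact_mod_cast hlt2
  omega
end

section
/- Let μ, ν be real numbers with μ > 0 and ν > 0, and suppose there exist natural numbers m, n ≥ 0 such that m/μ + n/ν = 1. Then ⌊(1/μ)·⌊(ν/μ)·x⌋⌋ ≥ ⌊(ν/μ)·⌊(1/μ)·x⌋⌋ holds for all real x. -/
/-- Sufficiency in (μ, ν)-coordinates: if μ, ν > 0 and m/μ + n/ν = 1 for some
naturals m, n, then [f_{1/μ}, f_{ν/μ}] ≥ 0 holds. -/
theorem sufficiency_uv (μ ν : ℝ) (hμ : 0 < μ) (hν : 0 < ν)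
    (h : ∃ m n : ℕ, (m : ℝ) / μ + (n : ℝ) / ν = 1) :
    ∀ x : ℝ, ⌊(1 / μ) * (⌊(ν / μ) * x⌋ : ℝ)⌋ ≥ ⌊(ν / μ) * (⌊(1 / μ) * x⌋ : ℝ)⌋ := by
  obtain ⟨m, n, hmn⟩ := h
  intro x
  set α : ℝ := 1 / μ with hαdef
  set β : ℝ := ν / μ with hβdef
  have hα0 : 0 < α := by positivity
  have hβ0 : 0 < β := by positivity
  -- key relation: 1/α = m + n/β
  have hrel : 1 / α = (m : ℝ) + (n : ℝ) / β := by
    rw [hαdef, hβdef]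
    field_simp
    field_simp at hmn
    nlinarith [hmn]
  set k : ℤ := ⌊β * (⌊α * x⌋ : ℝ)⌋ with hkdef
  rw [ge_iff_le, Int.le_floor]
  have h1 : (k : ℝ) ≤ β * (⌊α * x⌋ : ℝ) := Int.floor_le _
  -- step 1: ⌈k/β⌉ ≤ ⌊αx⌋
  have h2 : ⌈(k : ℝ) / β⌉ ≤ ⌊α * x⌋ := by
    rw [Int.ceil_le]
    rw [div_le_iff₀ hβ0]
    linarith [h1]
  -- step 2: (⌈k/β⌉ : ℝ) ≤ α * x
  have h3 : (⌈(k : ℝ) / β⌉ : ℝ) ≤ α * x := by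
    calc (⌈(k : ℝ) / β⌉ : ℝ) ≤ (⌊α * x⌋ : ℝ) := by exact_mod_cast h2
    _ ≤ α * x := Int.floor_le _
  -- decompose ⌈k/α⌉
  have hsplit : (k : ℝ) / α = (n : ℝ) * k / β + ((m : ℤ) * k : ℤ) := by
    have : (k : ℝ) / α = (k : ℝ) * (1 / α) := by ring
    rw [this, hrel]
    push_cast
    ring
  have hceil : ⌈(k : ℝ) / α⌉ = ⌈(n : ℝ) * k / β⌉ + (m : ℤ) * k := by
    rw [hsplit, Int.ceil_add_intCast]
  -- n⌈k/β⌉ ≥ ⌈nk/β⌉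
  have h4 : ⌈(n : ℝ) * k / β⌉ ≤ (n : ℤ) * ⌈(k : ℝ) / β⌉ := by
    rw [Int.ceil_le]
    push_cast
    have := Int.le_ceil ((k : ℝ) / β)
    have hn0 : (0 : ℝ) ≤ (n : ℝ) := Nat.cast_nonneg n
    calc (n : ℝ) * k / β = (n : ℝ) * ((k : ℝ) / β) := by ring
    _ ≤ (n : ℝ) * (⌈(k : ℝ) / β⌉ : ℝ) := by
        exact mul_le_mul_of_nonneg_left this hn0
  -- β⌈k/β⌉ ≥ k
  have h5 : (k : ℝ) ≤ β * (⌈(k : ℝ) / β⌉ : ℝ) := by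
    have := Int.le_ceil ((k : ℝ) / β)
    rw [div_le_iff₀ hβ0] at this
    linarith
  -- α⌈k/α⌉ ≤ β⌈k/β⌉
  have h6 : α * (⌈(k : ℝ) / α⌉ : ℝ) ≤ β * (⌈(k : ℝ) / β⌉ : ℝ) := by
    have hβα : β = α * ((m : ℝ) * β + n) := by
      have hβne : β ≠ 0 := ne_of_gt hβ0
      have hαne : α ≠ 0 := ne_of_gt hα0
      field_simp at hrel ⊢
      nlinarith [hrel]
    rw [hceil]
    push_cast
    have hm0 : (0 : ℝ) ≤ (m : ℝ) := Nat.cast_nonneg m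
    have h4' : ((⌈(n : ℝ) * k / β⌉ : ℤ) : ℝ) ≤ (n : ℝ) * (⌈(k : ℝ) / β⌉ : ℝ) := by
      exact_mod_cast h4
    have hB : ((⌈(n : ℝ) * k / β⌉ : ℤ) : ℝ) + (m : ℝ) * k ≤
        (m : ℝ) * (β * (⌈(k : ℝ) / β⌉ : ℝ)) + (n : ℝ) * (⌈(k : ℝ) / β⌉ : ℝ) := by
      nlinarith [h4', mul_le_mul_of_nonneg_left h5 hm0]
    calc α * (((⌈(n : ℝ) * k / β⌉ : ℤ) : ℝ) + (m : ℝ) * k)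
        ≤ α * ((m : ℝ) * (β * (⌈(k : ℝ) / β⌉ : ℝ)) + (n : ℝ) * (⌈(k : ℝ) / β⌉ : ℝ)) :=
          mul_le_mul_of_nonneg_left hB hα0.le
      _ = β * (⌈(k : ℝ) / β⌉ : ℝ) := by
          linear_combination (-((⌈(k : ℝ) / β⌉ : ℤ) : ℝ)) * hβα
  -- ⌈k/α⌉ ≤ ⌊βx⌋
  have h7 : ⌈(k : ℝ) / α⌉ ≤ ⌊β * x⌋ := by
    rw [Int.le_floor]
    have hx : (⌈(k : ℝ) / β⌉ : ℝ) / α ≤ x := by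
      rw [div_le_iff₀ hα0]
      linarith [h3]
    calc (⌈(k : ℝ) / α⌉ : ℝ) ≤ β * (⌈(k : ℝ) / β⌉ : ℝ) / α := by
          rw [le_div_iff₀ hα0]
          nlinarith [h6]
    _ ≤ β * x := by
          rw [div_le_iff₀ hα0] at hx ⊢
          nlinarith [hx]
  -- finish: k ≤ α⌈k/α⌉ ≤ α⌊βx⌋
  have h8 : (k : ℝ) ≤ α * (⌈(k : ℝ) / α⌉ : ℝ) := by
    have := Int.le_ceil ((k : ℝ) / α)
    rw [div_le_iff₀ hα0] at this
    linarith
  have h9 : (⌈(k : ℝ) / α⌉ : ℝ) ≤ (⌊β * x⌋ : ℝ) := by exact_mod_cast h7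
  have := mul_le_mul_of_nonneg_left h9 hα0.le
  linarith
end

section
/- Let σ, τ be real numbers with σ > 0 and τ > 0. Then ⌊σ·⌊(σ/τ)·x⌋⌋ ≥ ⌊(σ/τ)·⌊σ·x⌋⌋ holds for all real x if and only if for all integers k, m, n it is not the case that 0 < k·σ − m < σ and 0 < k·τ − n < τ. Equivalently, the cyclic subgroup of the torus ℝ²/ℤ² generated by the image of (σ, τ) is disjoint from the image in ℝ²/ℤ² of the open corner rectangle { (x, y) ∈ ℝ² : 0 < x < σ and 0 < y < τ }. -/
private lemma floor_lt_floor_aux {a b : ℝ} {m : ℤ} (h1 : a < m) (h2 : (m : ℝ) ≤ b) :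
    ⌊a⌋ < ⌊b⌋ :=
  lt_of_lt_of_le (Int.floor_lt.mpr h1) (Int.le_floor.mpr h2)

/-- Torus subgroup criterion: for σ, τ > 0, [f_σ, f_{σ/τ}] ≥ 0 holds iff for all
integers k, m, n it is not the case that 0 < k·σ − m < σ and 0 < k·τ − n < τ;
i.e. the cyclic torus subgroup generated by (σ, τ) avoids the open corner
rectangle C_{σ,τ}. -/
theorem torus_subgroup_criterion (σ τ : ℝ) (hσ : 0 < σ) (hτ : 0 < τ) :
    (∀ x : ℝ, ⌊σ * (⌊(σ / τ) * x⌋ : ℝ)⌋ ≥ ⌊(σ / τ) * (⌊σ * x⌋ : ℝ)⌋) ↔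
      ∀ k m n : ℤ, ¬ (0 < (k : ℝ) * σ - (m : ℝ) ∧ (k : ℝ) * σ - (m : ℝ) < σ ∧
        0 < (k : ℝ) * τ - (n : ℝ) ∧ (k : ℝ) * τ - (n : ℝ) < τ) := by
  have hred : (∀ x : ℝ, ⌊σ * (⌊(σ / τ) * x⌋ : ℝ)⌋ ≥ ⌊(σ / τ) * (⌊σ * x⌋ : ℝ)⌋) ↔
      (∀ N : ℤ, ⌊σ * (⌊(N : ℝ) / τ⌋ : ℝ)⌋ ≥ ⌊(σ / τ) * (N : ℝ)⌋) := by
    constructor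
    · intro h N
      have h1 : σ * ((N : ℝ) / σ) = (N : ℝ) := by field_simp
      have h2 : (σ / τ) * ((N : ℝ) / σ) = (N : ℝ) / τ := by
        field_simp
      have := h ((N : ℝ) / σ)
      rw [h1, h2, Int.floor_intCast] at this
      exact this
    · intro h x
      set N := ⌊σ * x⌋ with hN
      have hNx : (N : ℝ) ≤ σ * x := Int.floor_le _
      have h3 : (N : ℝ) / τ ≤ (σ / τ) * x := by
        rw [div_mul_eq_mul_div]
        gcongr
      have h4 : ⌊(N : ℝ) / τ⌋ ≤ ⌊(σ / τ) * x⌋ := Int.floor_le_floor h3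
      have h5 : σ * (⌊(N : ℝ) / τ⌋ : ℝ) ≤ σ * (⌊(σ / τ) * x⌋ : ℝ) := by
        apply mul_le_mul_of_nonneg_left _ hσ.le
        exact_mod_cast h4
      exact le_trans (h N) (Int.floor_le_floor h5)
  rw [hred]
  constructor
  · -- from ∀ N, produce the rectangle criterion
    intro h k m n hc
    obtain ⟨h1, h2, h3, h4⟩ := hc
    -- (k-1)σ < m < kσ, (k-1)τ < n < kτ
    rcases le_or_gt ((m : ℝ) * τ) ((n : ℝ) * σ) with hcase | hcase
    · have hfl : ⌊(n : ℝ) / τ⌋ = k - 1 := by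
        rw [Int.floor_eq_iff]
        constructor
        · rw [le_div_iff₀ hτ]; push_cast; linarith
        · rw [div_lt_iff₀ hτ]; push_cast; linarith
      have hlt : ⌊σ * ((⌊(n : ℝ) / τ⌋ : ℤ) : ℝ)⌋ < ⌊(σ / τ) * (n : ℝ)⌋ := by
        apply floor_lt_floor_aux (m := m)
        · rw [hfl]; push_cast; linarith
        · rw [div_mul_eq_mul_div, le_div_iff₀ hτ]; linarith
      exact absurd (h n) (not_le.mpr hlt)
    · have hfl : ⌊((-n : ℤ) : ℝ) / τ⌋ = -k := by
        rw [Int.floor_eq_iff]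
        constructor
        · rw [le_div_iff₀ hτ]; push_cast; linarith
        · rw [div_lt_iff₀ hτ]; push_cast; linarith
      have hlt : ⌊σ * ((⌊((-n : ℤ) : ℝ) / τ⌋ : ℤ) : ℝ)⌋ < ⌊(σ / τ) * ((-n : ℤ) : ℝ)⌋ := by
        apply floor_lt_floor_aux (m := -m)
        · rw [hfl]; push_cast; linarith
        · rw [div_mul_eq_mul_div, le_div_iff₀ hτ]; push_cast; nlinarith
      exact absurd (h (-n)) (not_le.mpr hlt)
  · -- from the rectangle criterion, prove ∀ N
    intro h N
    by_contra hN
    push_neg at hN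
    set K := ⌊(N : ℝ) / τ⌋ with hK
    set M := ⌊(σ / τ) * (N : ℝ)⌋ with hM
    have hlt : σ * (K : ℝ) < (M : ℝ) := Int.floor_lt.mp hN
    have hMle : (M : ℝ) * τ ≤ σ * (N : ℝ) := by
      have h' : (M : ℝ) ≤ (σ / τ) * (N : ℝ) := Int.floor_le _
      rw [div_mul_eq_mul_div, le_div_iff₀ hτ] at h'
      exact h'
    have hK1 : (K : ℝ) * τ ≤ (N : ℝ) := by
      have := Int.floor_le ((N : ℝ) / τ)
      rwa [le_div_iff₀ hτ] at this
    have hK2 : (N : ℝ) < ((K : ℝ) + 1) * τ := by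
      have := Int.lt_floor_add_one ((N : ℝ) / τ)
      rwa [div_lt_iff₀ hτ] at this
    refine h (K + 1) M N ⟨?_, ?_, ?_, ?_⟩ <;> push_cast
    · nlinarith
    · nlinarith
    · nlinarith
    · -- need Kτ < N strictly
      rcases lt_or_eq_of_le hK1 with hlt' | heq
      · linarith
      · exfalso; nlinarith
end
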